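/- Let ū : ℝ → ℝ be a C² function satisfying -ū'' ≥ A·ū - B on ℝ with constants A > 0, B ≥ 0, and suppose ū solves -ū'' = f(ū) for a continuous f with antiderivative F(u) = ∫₀ᵘ f. Then ū is bounded on ℝ. -/

import Mathlib

open Set Filter intervalIntegral

/-- If ū is a nonnegative C² function on ℝ solving -ū'' = f(ū) for a
continuous f, and satisfying -ū'' ≥ A·ū - B with A > 0, B ≥ 0, then ū is bounded. -/
theorem stmt8 (f : ℝ → ℝ) (hf : ContinuousOn f (Ici 0))
    (A B : ℝ) (hA : 0 < A) (hB : 0 ≤ B)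
    (ubar : ℝ → ℝ) (hC2 : ContDiff ℝ 2 ubar)
    (hnn : ∀ t : ℝ, 0 ≤ ubar t)
    (hode : ∀ t : ℝ, - deriv (deriv ubar) t = f (ubar t))
    (hineq : ∀ t : ℝ, A * ubar t - B ≤ - deriv (deriv ubar) t) :
    ∃ M : ℝ, ∀ t : ℝ, |ubar t| ≤ M := by
  -- extended f
  set g : ℝ → ℝ := fun x => f (max x 0) with hg
  have hgc : Continuous g :=
    hf.comp_continuous (continuous_id.max continuous_const) (fun x => le_max_right x 0)
  have hgeq : ∀ t, g (ubar t) = f (ubar t) := fun t => by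
    simp [hg, max_eq_left (hnn t)]
  -- derivatives
  have hcont : Continuous ubar := hC2.continuous
  have hdiff : Differentiable ℝ ubar := hC2.differentiable (by norm_num)
  have hC1 : ContDiff ℝ 1 (deriv ubar) := by
    have h2 : ContDiff ℝ (1 + 1) ubar := by rw [one_add_one_eq_two]; exact hC2
    exact (contDiff_succ_iff_deriv.mp h2).2.2
  have hdiff2 : Differentiable ℝ (deriv ubar) := hC1.differentiable (by norm_num)
  -- energy
  set E : ℝ → ℝ := fun t => (deriv ubar t)^2 / 2 + ∫ x in (0:ℝ)..(ubar t), g x with hE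
  have hEd : ∀ t, HasDerivAt E 0 t := by
    intro t
    have h1 : HasDerivAt (fun t => (deriv ubar t)^2 / 2)
        (deriv ubar t * deriv (deriv ubar) t) t := by
      have := (((hdiff2 t).hasDerivAt).pow 2).div_const 2
      refine this.congr_deriv ?_
      norm_num
      ring
    have h2 : HasDerivAt (fun u => ∫ x in (0:ℝ)..u, g x) (g (ubar t)) (ubar t) :=
      integral_hasDerivAt_right (hgc.intervalIntegrable _ _)
        hgc.aestronglyMeasurable.stronglyMeasurableAtFilter hgc.continuousAt
    have h3 := h2.comp t ((hdiff t).hasDerivAt)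
    have h4 := h1.add h3
    refine h4.congr_deriv ?_
    have := hode t
    rw [hgeq t, ← this]
    ring
  have hEc : ∀ t, E t = E 0 :=
    fun t => is_const_of_deriv_eq_zero (fun x => (hEd x).differentiableAt)
      (fun x => (hEd x).deriv) t 0
  -- range inequality
  have hfr : ∀ s ∈ range ubar, A * s - B ≤ g s := by
    rintro s ⟨τ, rfl⟩
    rw [hgeq τ, ← hode τ]
    exact hineq τ
  -- main estimate
  set C : ℝ := (deriv ubar 0)^2 / 2 + A * (ubar 0)^2 / 2 with hC
  have hC0 : 0 ≤ C := by positivity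
  have key : ∀ t, A * (ubar t)^2 / 2 - B * ubar t ≤ C := by
    intro t
    rcases le_or_gt (ubar t) (ubar 0) with hle | hlt
    · have h0 := hnn t
      nlinarith [sq_nonneg (deriv ubar 0), mul_le_mul_of_nonneg_left (pow_le_pow_left₀ h0 hle 2) hA.le, mul_nonneg hB h0]
    · -- ubar 0 < ubar t
      have hsub : Icc (ubar 0) (ubar t) ⊆ range ubar := by
        intro s hs
        have : s ∈ uIcc (ubar 0) (ubar t) := by
          rw [uIcc_of_le hlt.le]; exact hs
        have h := intermediate_value_uIcc (hcont.continuousOn (s := uIcc (0:ℝ) t)) this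
        exact ⟨h.choose, h.choose_spec.2⟩
      have hmono : ∫ x in (ubar 0)..(ubar t), (A * x - B) ≤ ∫ x in (ubar 0)..(ubar t), g x := by
        apply integral_mono_on hlt.le
        · exact (Continuous.intervalIntegrable (by continuity) _ _)
        · exact hgc.intervalIntegrable _ _
        · intro x hx
          exact hfr x (hsub hx)
      have hlin : ∫ x in (ubar 0)..(ubar t), (A * x - B)
          = A * ((ubar t)^2 - (ubar 0)^2) / 2 - B * (ubar t - ubar 0) := by
        rw [intervalIntegral.integral_sub ((Continuous.intervalIntegrable (by continuity) _ _))
            (intervalIntegrable_const)]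
        rw [intervalIntegral.integral_const_mul, integral_id, integral_const, smul_eq_mul]
        ring
      have hEt := hEc t
      have hdiffint : (∫ x in (0:ℝ)..(ubar t), g x) - ∫ x in (0:ℝ)..(ubar 0), g x
          = ∫ x in (ubar 0)..(ubar t), g x :=
        integral_interval_sub_left (hgc.intervalIntegrable _ _) (hgc.intervalIntegrable _ _)
      have hB0 : 0 ≤ B * ubar 0 := mul_nonneg hB (hnn 0)
      have hsq : 0 ≤ (deriv ubar t)^2 := sq_nonneg _
      simp only [hE] at hEt
      nlinarith [hmono, hlin, hdiffint, hEt]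
  -- conclude
  clear_value C
  clear hC
  obtain ⟨s, hs0, hs2⟩ : ∃ s : ℝ, 0 ≤ s ∧ s^2 = B^2 + 2*A*C :=
    ⟨Real.sqrt (B^2 + 2*A*C), Real.sqrt_nonneg _, Real.sq_sqrt (by nlinarith)⟩
  refine ⟨(B + s)/A, fun t => ?_⟩
  rw [abs_of_nonneg (hnn t)]
  have hk := key t
  have h1 : (A * ubar t - B)^2 ≤ s^2 := by nlinarith [mul_le_mul_of_nonneg_left hk hA.le]
  have h2 : A * ubar t - B ≤ s := by
    have h3 := Real.sqrt_le_sqrt h1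
    rw [Real.sqrt_sq_eq_abs, Real.sqrt_sq hs0] at h3
    exact (le_abs_self _).trans h3
  rw [le_div_iff₀ hA]
  nlinarith
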